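/- Consider the forced Lur'e system ẋ(t) = Ax(t) + B₁f(C₁x(t)) + B₂w(t) under (A1) and (A2) with time-independent f, and assume hypothesis (H1) holds. Suppose further that there exist a strictly positive vector v ∈ ℝ^{p₁} and ρ ∈ (0,1) such that v^⊤G₁₁(0)Δ ≤ ρv^⊤ componentwise, where G₁₁(0) := C₁(−A)^{-1}B₁. Then for every w* ∈ ℝ^{m₂} there exists a unique x* ∈ ℝ^n such that 0 = Ax* + B₁f(C₁x*) + B₂w*. -/

import Mathlib

open Matrix
open scoped NNReal

noncomputable section

noncomputable section

private lemma mat_mul_nonneg' {a b c : ℕ} {P : Matrix (Fin a) (Fin b) ℝ}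
    {Q : Matrix (Fin b) (Fin c) ℝ}
    (hP : ∀ i j, 0 ≤ P i j) (hQ : ∀ i j, 0 ≤ Q i j) : ∀ i j, 0 ≤ (P * Q) i j := by
  intro i j
  rw [Matrix.mul_apply]
  exact Finset.sum_nonneg fun k _ => mul_nonneg (hP i k) (hQ k j)

private lemma abs_mulVec_le' {a b : ℕ} (K : Matrix (Fin a) (Fin b) ℝ)
    (hK : ∀ i j, 0 ≤ K i j) (x y : Fin b → ℝ) (hxy : ∀ k, |x k| ≤ y k) (i : Fin a) :
    |K.mulVec x i| ≤ K.mulVec y i := by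
  show |∑ k, K i k * x k| ≤ ∑ k, K i k * y k
  calc |∑ k, K i k * x k| ≤ ∑ k, |K i k * x k| := Finset.abs_sum_le_sum_abs _ _
    _ ≤ ∑ k, K i k * y k := Finset.sum_le_sum fun k _ => by
        rw [abs_mul, abs_of_nonneg (hK i k)]
        exact mul_le_mul_of_nonneg_left (hxy k) (hK i k)

private lemma neg_inv_nonneg' {n : ℕ} (A : Matrix (Fin n) (Fin n) ℝ)
    (hA : ∀ i j, i ≠ j → 0 ≤ A i j)
    (ξ : ℝ) (hξ : 0 < ξ) (p : Fin n → ℝ) (hp : ∀ i, 0 < p i)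
    (hpA : ∀ j, Matrix.vecMul p A j ≤ -(ξ * p j)) :
    ∃ B : Matrix (Fin n) (Fin n) ℝ, (-A) * B = 1 ∧ B * (-A) = 1 ∧ ∀ i j, 0 ≤ B i j := by
  classical
  set s : ℝ := ξ + ∑ i, |A i i| with hs_def
  have hsum_nonneg : (0:ℝ) ≤ ∑ i, |A i i| := Finset.sum_nonneg fun i _ => abs_nonneg _
  have hs : 0 < s := by positivity
  have hs_diag : ∀ i, 0 ≤ s + A i i := by
    intro i
    have h1 : |A i i| ≤ ∑ j, |A j j| := Finset.single_le_sum (f := fun j => |A j j|) (fun j _ => abs_nonneg _) (Finset.mem_univ i)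
    have h2 : -A i i ≤ |A i i| := neg_le_abs _
    simp only [hs_def]; linarith
  set N : Matrix (Fin n) (Fin n) ℝ := s • (1 : Matrix (Fin n) (Fin n) ℝ) + A with hN_def
  have hN : ∀ i j, 0 ≤ N i j := by
    intro i j
    simp only [hN_def, Matrix.add_apply, Matrix.smul_apply, Matrix.one_apply, smul_eq_mul]
    by_cases h : i = j
    · subst h; simpa using hs_diag i
    · simp [h]; exact hA i j h
  have hcol : ∀ j, ∑ i, p i * N i j ≤ (s - ξ) * p j := by
    intro j
    have : ∑ i, p i * N i j = s * p j + Matrix.vecMul p A j := by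
      simp only [hN_def, Matrix.add_apply, Matrix.smul_apply, Matrix.one_apply, smul_eq_mul,
        mul_add, Finset.sum_add_distrib]
      congr 1
      · rw [Finset.sum_eq_single j]
        · simp [mul_comm]
        · intro i _ hij; simp [Matrix.one_apply, hij]
        · intro h; exact absurd (Finset.mem_univ j) h
    rw [this]
    have := hpA j
    nlinarith [hp j]
  set p' : Fin n → ℝ := fun i => (p i)⁻¹ with hp'_def
  have hp' : ∀ i, 0 < p' i := fun i => inv_pos.mpr (hp i)
  set X : Matrix (Fin n) (Fin n) ℝ :=
    Matrix.diagonal p' * Nᵀ * Matrix.diagonal p with hX_def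
  have hXapp : ∀ i j, X i j = p' i * N j i * p j := by
    intro i j
    simp [hX_def, Matrix.mul_diagonal, Matrix.diagonal_mul, Matrix.transpose_apply, mul_assoc]
  have hX : ∀ i j, 0 ≤ X i j := fun i j => by
    rw [hXapp]
    exact mul_nonneg (mul_nonneg (hp' i).le (hN j i)) (hp j).le
  have hXrow : ∀ i, ∑ j, X i j ≤ s - ξ := by
    intro i
    have h1 : ∑ j, X i j = p' i * ∑ j, p j * N j i := by
      rw [Finset.mul_sum]
      exact Finset.sum_congr rfl fun j _ => by rw [hXapp]; ring
    rw [h1]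
    have h2 := hcol i
    have h3 : p' i * ∑ j, p j * N j i ≤ p' i * ((s - ξ) * p i) :=
      mul_le_mul_of_nonneg_left h2 (hp' i).le
    calc p' i * ∑ j, p j * N j i ≤ p' i * ((s - ξ) * p i) := h3
      _ = s - ξ := by
          simp only [hp'_def]
          field_simp
          rw [mul_comm, mul_div_assoc, div_self (hp i).ne', mul_one]
  letI : NormedRing (Matrix (Fin n) (Fin n) ℝ) := Matrix.linftyOpNormedRing
  letI : NormedAlgebra ℝ (Matrix (Fin n) (Fin n) ℝ) := Matrix.linftyOpNormedAlgebra
  haveI : CompleteSpace (Matrix (Fin n) (Fin n) ℝ) := FiniteDimensional.complete ℝ _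
  set t : Matrix (Fin n) (Fin n) ℝ := s⁻¹ • X with ht_def
  have ht_app : ∀ i j, t i j = s⁻¹ * X i j := fun i j => rfl
  have ht_nonneg : ∀ i j, 0 ≤ t i j := fun i j => by
    rw [ht_app]; exact mul_nonneg (inv_pos.mpr hs).le (hX i j)
  have ht : ‖t‖ < 1 := by
    rw [Matrix.linfty_opNorm_def]
    have hlt : ∀ i : Fin n, (∑ j, ‖t i j‖₊ : ℝ≥0) < 1 := by
      intro i
      rw [← NNReal.coe_lt_coe, NNReal.coe_one, NNReal.coe_sum]
      have hco : ∀ j, ((‖t i j‖₊ : ℝ≥0) : ℝ) = t i j := by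
        intro j
        rw [coe_nnnorm, Real.norm_eq_abs, abs_of_nonneg (ht_nonneg i j)]
      calc ∑ j, ((‖t i j‖₊ : ℝ≥0) : ℝ) = ∑ j, t i j := Finset.sum_congr rfl fun j _ => hco j
        _ = ∑ j, s⁻¹ * X i j := Finset.sum_congr rfl fun j _ => ht_app i j
        _ = s⁻¹ * ∑ j, X i j := (Finset.mul_sum _ _ _).symm
        _ ≤ s⁻¹ * (s - ξ) := mul_le_mul_of_nonneg_left (hXrow i) (inv_pos.mpr hs).le
        _ < 1 := by
            rw [mul_sub, inv_mul_cancel₀ hs.ne']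
            nlinarith [inv_pos.mpr hs]
    have h01 : (⊥ : ℝ≥0) < 1 := by norm_num
    have := (Finset.sup_lt_iff (f := fun i : Fin n => ∑ j, ‖t i j‖₊)
        (s := (Finset.univ : Finset (Fin n))) h01).mpr (fun i _ => hlt i)
    exact_mod_cast this
  set u : (Matrix (Fin n) (Fin n) ℝ)ˣ := Units.oneSub t ht with hu_def
  set R : Matrix (Fin n) (Fin n) ℝ := (↑u⁻¹ : Matrix (Fin n) (Fin n) ℝ) with hR_def
  have hRsum : R = ∑' k : ℕ, t ^ k := rfl
  have hpow : ∀ (k : ℕ) i j, 0 ≤ (t ^ k) i j := by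
    intro k
    induction k with
    | zero => intro i j; rw [pow_zero]; by_cases h : i = j <;> simp [Matrix.one_apply, h]
    | succ m ih => intro i j; rw [pow_succ]; exact mat_mul_nonneg' ih ht_nonneg i j
  have hR : ∀ i j, 0 ≤ R i j := by
    intro i j
    have hsummable : Summable fun k : ℕ => t ^ k := summable_geometric_of_norm_lt_one ht
    have hentry : R i j = ∑' k : ℕ, (t ^ k) i j := by
      rw [hRsum]
      let E : Matrix (Fin n) (Fin n) ℝ →ₗ[ℝ] ℝ :=
        { toFun := fun M => M i j
          map_add' := fun M₁ M₂ => rfl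
          map_smul' := fun r M => rfl }
      have hEc : Continuous E := E.continuous_of_finiteDimensional
      have := hsummable.hasSum.mapL (E.toContinuousLinearMap)
      exact this.tsum_eq.symm
    rw [hentry]
    exact tsum_nonneg fun k => hpow k i j
  have hmul' : R * (1 - t) = 1 := u.inv_mul
  set D : Matrix (Fin n) (Fin n) ℝ := Matrix.diagonal p with hD_def
  set D' : Matrix (Fin n) (Fin n) ℝ := Matrix.diagonal p' with hD'_def
  have hDD' : D * D' = 1 := by
    rw [hD_def, hD'_def, Matrix.diagonal_mul_diagonal]
    have : (fun i => p i * p' i) = fun _ => (1:ℝ) := funext fun i => mul_inv_cancel₀ (hp i).ne'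
    rw [this, Matrix.diagonal_one]
  have hident : (1 : Matrix (Fin n) (Fin n) ℝ) - t = D' * (s⁻¹ • (-A)ᵀ) * D := by
    ext i j
    rw [Matrix.sub_apply, Matrix.mul_diagonal, Matrix.diagonal_mul]
    simp only [Matrix.smul_apply, Matrix.transpose_apply, Matrix.neg_apply, smul_eq_mul]
    rw [ht_app, hXapp, Matrix.one_apply]
    have hNA : N j i = s * (if j = i then 1 else 0) + A j i := by
      simp [hN_def, Matrix.one_apply]
    rw [hNA]
    by_cases h : i = j
    · subst h
      simp only [if_pos rfl, hp'_def]
      have hpne : p i ≠ 0 := (hp i).ne'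
      have hsne : s ≠ 0 := hs.ne'
      field_simp
      ring
    · have h' : ¬ (j = i) := fun hh => h hh.symm
      simp only [if_neg h, if_neg h']
      ring
  have h2 : D * R * D' * (s⁻¹ • (-A)ᵀ) * D * D' = D * 1 * D' := by
    have h := hmul'
    rw [hident] at h
    have h2 : D * (R * (D' * (s⁻¹ • (-A)ᵀ) * D)) * D' = D * 1 * D' := by rw [h]
    simp only [← mul_assoc] at h2 ⊢
    exact h2
  rw [mul_one, hDD', mul_assoc (D * R * D' * (s⁻¹ • (-A)ᵀ)) D D', hDD', mul_one] at h2
  -- h2 : D * R * D' * (s⁻¹ • (-A)ᵀ) = 1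
  have h3 := congrArg Matrix.transpose h2
  rw [Matrix.transpose_mul, Matrix.transpose_smul, Matrix.transpose_transpose,
    Matrix.transpose_one] at h3
  -- h3 : (s⁻¹ • (-A)) * (D * R * D')ᵀ = 1
  have h4 : (-A) * (s⁻¹ • (D * R * D')ᵀ) = 1 := by
    rw [Matrix.mul_smul, ← Matrix.smul_mul]
    exact h3
  refine ⟨s⁻¹ • (D * R * D')ᵀ, h4, mul_eq_one_comm.mp h4, ?_⟩
  intro i j
  rw [Matrix.smul_apply, Matrix.transpose_apply, smul_eq_mul]
  have hYapp : (D * R * D') j i = p j * R j i * p' i := by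
    rw [hD_def, hD'_def, Matrix.mul_diagonal, Matrix.diagonal_mul]
  rw [hYapp]
  exact mul_nonneg (inv_pos.mpr hs).le
    (mul_nonneg (mul_nonneg (hp j).le (hR j i)) (hp' i).le)


/-- A square real matrix is Metzler if all its off-diagonal entries are nonnegative. -/
def IsMetzler {n : ℕ} (A : Matrix (Fin n) (Fin n) ℝ) : Prop :=
  ∀ i j, i ≠ j → 0 ≤ A i j

/-- existence and uniqueness of the equilibrium of the forced Lur'e system
for each constant forcing term, under (A1), (A2), (H1) and the weighted small-gain
condition `v⊤ G₁₁(0) Δ ≤ ρ v⊤`. -/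
theorem stmt9 {n m₁ m₂ p₁ : ℕ}
    (A : Matrix (Fin n) (Fin n) ℝ) (B₁ : Matrix (Fin n) (Fin m₁) ℝ)
    (B₂ : Matrix (Fin n) (Fin m₂) ℝ) (C₁ : Matrix (Fin p₁) (Fin n) ℝ)
    -- (A1)
    (hA : IsMetzler A) (hB₁ : ∀ i j, 0 ≤ B₁ i j) (hB₂ : ∀ i j, 0 ≤ B₂ i j)
    (hC₁ : ∀ i j, 0 ≤ C₁ i j)
    -- (A2), time-independent
    (f : (Fin p₁ → ℝ) → Fin m₁ → ℝ) (Δ : Matrix (Fin m₁) (Fin p₁) ℝ)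
    (hΔ : ∀ i j, 0 ≤ Δ i j)
    (hf_inc : ∀ ζ₁ ζ₂ : Fin p₁ → ℝ,
        ∀ i, |f ζ₁ i - f ζ₂ i| ≤ Δ.mulVec (fun j => |ζ₁ j - ζ₂ j|) i)
    -- (H1)
    (ξ : ℝ) (hξ : 0 < ξ) (p : Fin n → ℝ) (hp : ∀ i, 0 < p i)
    (hH1 : ∀ j, vecMul p (A + B₁ * Δ * C₁) j ≤ -(ξ * p j))
    -- weighted small-gain condition v⊤ G₁₁(0) Δ ≤ ρ v⊤ with G₁₁(0) = C₁(−A)⁻¹B₁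
    (v : Fin p₁ → ℝ) (hv : ∀ i, 0 < v i) (ρ : ℝ) (hρ0 : 0 < ρ) (hρ1 : ρ < 1)
    (hsg : ∀ j, vecMul v ((C₁ * (-A)⁻¹ * B₁) * Δ) j ≤ ρ * v j) :
    ∀ wstar : Fin m₂ → ℝ, ∃! xstar : Fin n → ℝ,
      (0 : Fin n → ℝ) =
        A.mulVec xstar + B₁.mulVec (f (C₁.mulVec xstar)) + B₂.mulVec wstar := by
  intro wstar
  classical
  -- Step 1: p⊤ A ≤ -ξ p⊤
  have hpA : ∀ j, Matrix.vecMul p A j ≤ -(ξ * p j) := by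
    intro j
    have h1 := hH1 j
    rw [Matrix.vecMul_add] at h1
    have h3 : 0 ≤ Matrix.vecMul p (B₁ * Δ * C₁) j := by
      have hM := mat_mul_nonneg' (mat_mul_nonneg' hB₁ hΔ) hC₁
      show (0:ℝ) ≤ ∑ i, p i * (B₁ * Δ * C₁) i j
      exact Finset.sum_nonneg fun i _ => mul_nonneg (hp i).le (hM i j)
    have h2 : Matrix.vecMul p A j + Matrix.vecMul p (B₁ * Δ * C₁) j ≤ -(ξ * p j) := h1
    linarith
  obtain ⟨Binv, hABinv, hBinvA, hBinv⟩ :=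
    neg_inv_nonneg' A (fun i j h => hA i j h) ξ hξ p hp hpA
  have hinv : (-A)⁻¹ = Binv := Matrix.inv_eq_right_inv hABinv
  set c : Fin n → ℝ := B₂.mulVec wstar with hc_def
  set K : Matrix (Fin p₁) (Fin m₁) ℝ := C₁ * Binv * B₁ with hK_def
  have hKnn : ∀ i j, 0 ≤ K i j := mat_mul_nonneg' (mat_mul_nonneg' hC₁ hBinv) hB₁
  set Mt : Matrix (Fin p₁) (Fin p₁) ℝ := K * Δ with hMt_def
  have hMtnn : ∀ i j, 0 ≤ Mt i j := mat_mul_nonneg' hKnn hΔ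
  have hsg' : ∀ j, Matrix.vecMul v Mt j ≤ ρ * v j := by
    intro j
    have := hsg j
    rwa [hinv] at this
  set T : (Fin p₁ → ℝ) → (Fin p₁ → ℝ) :=
    fun z => K.mulVec (f z) + (C₁ * Binv).mulVec c with hT_def
  set d : (Fin p₁ → ℝ) → (Fin p₁ → ℝ) → ℝ := fun a b => ∑ i, v i * |a i - b i| with hd_def
  have hd_nonneg : ∀ a b, 0 ≤ d a b := fun a b =>
    Finset.sum_nonneg fun i _ => mul_nonneg (hv i).le (abs_nonneg _)
  -- componentwise Lipschitz bound for T
  have habs : ∀ a b i, |T a i - T b i| ≤ Mt.mulVec (fun j => |a j - b j|) i := by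
    intro a b i
    have h1 : T a i - T b i = K.mulVec (fun k => f a k - f b k) i := by
      simp only [hT_def, Pi.add_apply]
      have h0 : K.mulVec (fun k => f a k - f b k) i
          = K.mulVec (f a) i - K.mulVec (f b) i := by
        show (∑ k, K i k * (f a k - f b k)) = (∑ k, K i k * f a k) - ∑ k, K i k * f b k
        rw [← Finset.sum_sub_distrib]
        exact Finset.sum_congr rfl fun k _ => by ring
      rw [h0]; ring
    rw [h1]
    have h2 := abs_mulVec_le' K hKnn _ _ (fun k => hf_inc a b k) i
    rwa [Matrix.mulVec_mulVec] at h2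
  -- contraction
  have hcontr : ∀ a b, d (T a) (T b) ≤ ρ * d a b := by
    intro a b
    have h1 : d (T a) (T b) ≤ ∑ i, v i * Mt.mulVec (fun j => |a j - b j|) i :=
      Finset.sum_le_sum fun i _ =>
        mul_le_mul_of_nonneg_left (habs a b i) (hv i).le
    have h2 : ∑ i, v i * Mt.mulVec (fun j => |a j - b j|) i
        = ∑ j, Matrix.vecMul v Mt j * |a j - b j| := by
      show ∑ i, v i * ∑ j, Mt i j * |a j - b j|
          = ∑ j, (∑ i, v i * Mt i j) * |a j - b j|
      simp only [Finset.mul_sum, Finset.sum_mul]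
      rw [Finset.sum_comm]
      exact Finset.sum_congr rfl fun i _ => Finset.sum_congr rfl fun j _ => by ring
    have h3 : ∑ j, Matrix.vecMul v Mt j * |a j - b j| ≤ ∑ j, ρ * (v j * |a j - b j|) := by
      refine Finset.sum_le_sum fun j _ => ?_
      have := mul_le_mul_of_nonneg_right (hsg' j) (abs_nonneg (a j - b j))
      calc Matrix.vecMul v Mt j * |a j - b j| ≤ ρ * v j * |a j - b j| := this
        _ = ρ * (v j * |a j - b j|) := by ring
    calc d (T a) (T b) ≤ ∑ i, v i * Mt.mulVec (fun j => |a j - b j|) i := h1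
      _ = ∑ j, Matrix.vecMul v Mt j * |a j - b j| := h2
      _ ≤ ∑ j, ρ * (v j * |a j - b j|) := h3
      _ = ρ * d a b := by rw [hd_def, Finset.mul_sum]
  -- uniqueness of fixed points of T
  have huniq : ∀ a b, T a = a → T b = b → a = b := by
    intro a b ha hb
    have h1 : d a b ≤ ρ * d a b := by
      calc d a b = d (T a) (T b) := by rw [ha, hb]
        _ ≤ ρ * d a b := hcontr a b
    have h2 : d a b = 0 := by nlinarith [hd_nonneg a b]
    funext j
    have h3 : ∀ i ∈ Finset.univ, (0:ℝ) ≤ v i * |a i - b i| :=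
      fun i _ => mul_nonneg (hv i).le (abs_nonneg _)
    have h4 := (Finset.sum_eq_zero_iff_of_nonneg h3).mp h2 j (Finset.mem_univ j)
    have h5 : |a j - b j| = 0 := by
      rcases mul_eq_zero.mp h4 with h | h
      · exact absurd h (hv j).ne'
      · exact h
    have := abs_eq_zero.mp h5
    linarith [sub_eq_zero.mp this]
  -- existence of a fixed point of T via iteration
  set z : ℕ → Fin p₁ → ℝ := fun k => T^[k] 0 with hz_def
  have hz : ∀ k, z (k+1) = T (z k) := fun k => Function.iterate_succ_apply' T k 0
  have hgeom : ∀ k, d (z (k+1)) (z k) ≤ d (z 1) (z 0) * ρ ^ k := by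
    intro k
    induction k with
    | zero => simp
    | succ m ih =>
      rw [hz m] at ih
      rw [hz (m+1), hz m]
      calc d (T (T (z m))) (T (z m)) ≤ ρ * d (T (z m)) (z m) := hcontr _ _
        _ ≤ ρ * (d (z 1) (z 0) * ρ ^ m) := mul_le_mul_of_nonneg_left ih hρ0.le
        _ = d (z 1) (z 0) * ρ ^ (m+1) := by ring
  have hcoord : ∀ j, CauchySeq fun k => z k j := by
    intro j
    apply cauchySeq_of_le_geometric ρ ((v j)⁻¹ * d (z 1) (z 0)) hρ1
    intro k
    rw [Real.dist_eq]
    have h1 : v j * |z (k+1) j - z k j| ≤ d (z (k+1)) (z k) :=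
      Finset.single_le_sum (f := fun i => v i * |z (k+1) i - z k i|)
        (fun i _ => mul_nonneg (hv i).le (abs_nonneg _)) (Finset.mem_univ j)
    have h2 := hgeom k
    have hvj := hv j
    have habs' : |z k j - z (k+1) j| = |z (k+1) j - z k j| := abs_sub_comm _ _
    rw [habs']
    calc |z (k+1) j - z k j| = (v j)⁻¹ * (v j * |z (k+1) j - z k j|) := by
          rw [← mul_assoc, inv_mul_cancel₀ hvj.ne', one_mul]
      _ ≤ (v j)⁻¹ * (d (z 1) (z 0) * ρ ^ k) :=
          mul_le_mul_of_nonneg_left (le_trans h1 h2) (inv_pos.mpr hvj).le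
      _ = (v j)⁻¹ * d (z 1) (z 0) * ρ ^ k := by ring
  have hlim : ∀ j, ∃ l, Filter.Tendsto (fun k => z k j) Filter.atTop (nhds l) :=
    fun j => cauchySeq_tendsto_of_complete (hcoord j)
  choose zs hzs using hlim
  have htends : Filter.Tendsto z Filter.atTop (nhds zs) := tendsto_pi_nhds.mpr hzs
  -- continuity of f and T
  have hS_nonneg : (0:ℝ) ≤ ∑ i, ∑ j, Δ i j :=
    Finset.sum_nonneg fun i _ => Finset.sum_nonneg fun j _ => hΔ i j
  have hfl : LipschitzWith (Real.toNNReal (∑ i, ∑ j, Δ i j)) f := by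
    apply LipschitzWith.of_dist_le_mul
    intro z₁ z₂
    have hrhs : (0:ℝ) ≤ (Real.toNNReal (∑ i, ∑ j, Δ i j) : ℝ) * dist z₁ z₂ :=
      mul_nonneg (NNReal.coe_nonneg _) dist_nonneg
    rw [dist_pi_le_iff hrhs]
    intro i
    rw [Real.dist_eq]
    have h1 := hf_inc z₁ z₂ i
    have h2 : Δ.mulVec (fun j => |z₁ j - z₂ j|) i ≤ (∑ j, Δ i j) * dist z₁ z₂ := by
      show (∑ j, Δ i j * |z₁ j - z₂ j|) ≤ (∑ j, Δ i j) * dist z₁ z₂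
      rw [Finset.sum_mul]
      refine Finset.sum_le_sum fun j _ => ?_
      have hd : |z₁ j - z₂ j| ≤ dist z₁ z₂ := by
        rw [← Real.dist_eq]
        exact dist_le_pi_dist z₁ z₂ j
      exact mul_le_mul_of_nonneg_left hd (hΔ i j)
    have h3 : (∑ j, Δ i j) * dist z₁ z₂ ≤ (∑ i, ∑ j, Δ i j) * dist z₁ z₂ := by
      refine mul_le_mul_of_nonneg_right ?_ dist_nonneg
      exact Finset.single_le_sum (f := fun i => ∑ j, Δ i j)
        (fun i _ => Finset.sum_nonneg fun j _ => hΔ i j) (Finset.mem_univ i)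
    rw [Real.coe_toNNReal _ hS_nonneg]
    linarith
  have hmv : Continuous fun y : Fin m₁ → ℝ => K.mulVec y := by
    rw [continuous_pi_iff]
    intro i
    show Continuous fun y : Fin m₁ → ℝ => ∑ k, K i k * y k
    exact continuous_finset_sum _ fun k _ => continuous_const.mul (continuous_apply k)
  have hTc : Continuous T := by
    rw [hT_def]
    exact ((hmv.comp hfl.continuous).add continuous_const)
  have hfix : T zs = zs := by
    have h1 : Filter.Tendsto (fun k => z (k+1)) Filter.atTop (nhds zs) :=
      htends.comp (Filter.tendsto_add_atTop_nat 1)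
    have h2 : Filter.Tendsto (fun k => T (z k)) Filter.atTop (nhds (T zs)) :=
      (hTc.tendsto zs).comp htends
    have h3 : (fun k => T (z k)) = fun k => z (k+1) := funext fun k => (hz k).symm
    rw [h3] at h2
    exact tendsto_nhds_unique h2 h1
  -- equivalence between equilibria and fixed points
  have hequiv : ∀ x : Fin n → ℝ,
      ((0 : Fin n → ℝ) = A.mulVec x + B₁.mulVec (f (C₁.mulVec x)) + c) ↔
      x = Binv.mulVec (B₁.mulVec (f (C₁.mulVec x)) + c) := by
    intro x
    constructor
    · intro h
      have h2 : A.mulVec x + (B₁.mulVec (f (C₁.mulVec x)) + c) = 0 := by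
        rw [← add_assoc]; exact h.symm
      have h1 : (-A).mulVec x = B₁.mulVec (f (C₁.mulVec x)) + c := by
        rw [Matrix.neg_mulVec]
        exact (eq_neg_of_add_eq_zero_right h2).symm
      have h3 : Binv.mulVec ((-A).mulVec x) = x := by
        rw [Matrix.mulVec_mulVec, hBinvA, Matrix.one_mulVec]
      conv_lhs => rw [← h3, h1]
    · intro h
      have h1 : (-A).mulVec x = B₁.mulVec (f (C₁.mulVec x)) + c := by
        conv_lhs => rw [h]
        rw [Matrix.mulVec_mulVec, hABinv, Matrix.one_mulVec]
      rw [Matrix.neg_mulVec] at h1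
      have h2 : A.mulVec x + (B₁.mulVec (f (C₁.mulVec x)) + c) = 0 := by
        rw [← h1]
        exact add_neg_cancel _
      rw [← add_assoc] at h2
      exact h2.symm
  have hCg : ∀ zv : Fin p₁ → ℝ,
      C₁.mulVec (Binv.mulVec (B₁.mulVec (f zv) + c)) = T zv := by
    intro zv
    calc C₁ *ᵥ (Binv *ᵥ (B₁ *ᵥ f zv + c))
        = (C₁ * Binv) *ᵥ (B₁ *ᵥ f zv + c) := Matrix.mulVec_mulVec _ C₁ Binv
      _ = (C₁ * Binv) *ᵥ (B₁ *ᵥ f zv) + (C₁ * Binv) *ᵥ c := Matrix.mulVec_add _ _ _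
      _ = ((C₁ * Binv) * B₁) *ᵥ f zv + (C₁ * Binv) *ᵥ c := by rw [Matrix.mulVec_mulVec]
      _ = T zv := rfl
  refine ⟨Binv.mulVec (B₁.mulVec (f zs) + c), ?_, ?_⟩
  · have hCx : C₁.mulVec (Binv.mulVec (B₁.mulVec (f zs) + c)) = zs := by
      rw [hCg, hfix]
    refine (hequiv _).mpr ?_
    rw [hCx]
  · intro x hx
    have h1 := (hequiv x).mp hx
    have h2 : T (C₁.mulVec x) = C₁.mulVec x := by
      conv_rhs => rw [h1]
      rw [hCg]
    have h3 : C₁.mulVec x = zs := huniq _ _ h2 hfix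
    rw [h1, h3]
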